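/- arXiv:2103.13345 — 3 statements merged into one kernel-verified Lean document; each statement's English description precedes it below -/
import Mathlib

section
/- Let ρ, γ > 1, τ > 2, κ ≥ 1, and set β = 1 + 1/(τκ). Then [(ρ'/(ρβ)')']^{1/(γβ)'} ≤ 2eρτ · κ^{1/γ'}, where x' = x/(x-1) denotes the Hölder conjugate. -/
/-- The Hölder conjugate `x' = x/(x-1)` of a real number `x`. -/
noncomputable def hconj (x : ℝ) : ℝ := x / (x - 1)

/-- For `ρ, γ > 1`, `τ > 2`, `κ ≥ 1` and `β = 1 + 1/(τκ)`, one has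
`[(ρ'/(ρβ)')']^{1/(γβ)'} ≤ 2·e·ρ·τ·κ^{1/γ'}`. -/
theorem stmt_2 (ρ γ τ κ β : ℝ) (hρ : 1 < ρ) (hγ : 1 < γ) (hτ : 2 < τ) (hκ : 1 ≤ κ)
    (hβ : β = 1 + 1 / (τ * κ)) :
    (hconj (hconj ρ / hconj (ρ * β))) ^ (1 / hconj (γ * β)) ≤
      2 * Real.exp 1 * ρ * τ * κ ^ (1 / hconj γ) := by
  have hκ0 : (0:ℝ) < κ := lt_of_lt_of_le one_pos hκ
  have hτκ : 2 < τ * κ := lt_of_lt_of_le hτ (le_mul_of_one_le_right (by linarith) hκ)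
  have hτκ0 : (0:ℝ) < τ * κ := by linarith
  have hβ1 : 1 < β := by rw [hβ]; have := one_div_pos.mpr hτκ0; linarith
  have hβm1 : β - 1 = 1 / (τ * κ) := by rw [hβ]; ring
  have hρβ : 1 < ρ * β := one_lt_mul_of_lt_of_le hρ hβ1.le
  have hγβ : 1 < γ * β := one_lt_mul_of_lt_of_le hγ hβ1.le
  have hρ1 : ρ - 1 ≠ 0 := by linarith
  have hρβ1 : ρ * β - 1 ≠ 0 := by linarith
  have hβ0 : (0:ℝ) < β := by linarith
  have hβm1' : β - 1 ≠ 0 := by linarith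
  -- simplify the base
  have hA : hconj ρ / hconj (ρ * β) = (ρ * β - 1) / ((ρ - 1) * β) := by
    unfold hconj
    field_simp
  have hA1 : hconj ρ / hconj (ρ * β) - 1 = (β - 1) / ((ρ - 1) * β) := by
    rw [hA]
    field_simp
    ring
  have hX : hconj (hconj ρ / hconj (ρ * β)) = (ρ * β - 1) / (β - 1) := by
    rw [show hconj (hconj ρ / hconj (ρ * β)) =
        (hconj ρ / hconj (ρ * β)) / (hconj ρ / hconj (ρ * β) - 1) from rfl, hA1, hA]
    rw [div_div_div_eq]
    rw [div_eq_div_iff (by positivity) (by positivity)]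
    ring
  -- simplify the exponent
  have hE : 1 / hconj (γ * β) = (γ * β - 1) / (γ * β) := by
    unfold hconj
    rw [one_div_div]
  have hE2 : 1 / hconj γ = (γ - 1) / γ := by
    unfold hconj
    rw [one_div_div]
  rw [hX, hE, hE2]
  set X : ℝ := (ρ * β - 1) / (β - 1) with hXdef
  set e : ℝ := (γ * β - 1) / (γ * β) with hedef
  have hX0 : 0 ≤ X := div_nonneg (by linarith) (by linarith)
  have hXle : X ≤ 2 * ρ * τ * κ := by
    have hval : X = ρ * (τ * κ) + ρ - τ * κ := by
      rw [hXdef, hβm1, hβ]; field_simp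
    rw [hval]; nlinarith
  have he0 : 0 ≤ e := div_nonneg (by linarith) (by linarith)
  have he1 : e ≤ 1 := by
    rw [hedef, div_le_one (by linarith)]; linarith
  have h2ρτ : (1:ℝ) ≤ 2 * ρ * τ := by nlinarith
  calc X ^ e ≤ (2 * ρ * τ * κ) ^ e := Real.rpow_le_rpow hX0 hXle he0
    _ = (2 * ρ * τ) ^ e * κ ^ e := Real.mul_rpow (by linarith) hκ0.le
    _ ≤ (2 * ρ * τ) * κ ^ e := by
        apply mul_le_mul_of_nonneg_right _ (Real.rpow_nonneg hκ0.le e)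
        calc (2 * ρ * τ) ^ e ≤ (2 * ρ * τ) ^ (1:ℝ) :=
                Real.rpow_le_rpow_of_exponent_le h2ρτ he1
            _ = 2 * ρ * τ := Real.rpow_one _
    _ ≤ (2 * ρ * τ) * (κ ^ ((γ - 1) / γ) * Real.exp 1) := by
        apply mul_le_mul_of_nonneg_left _ (by linarith)
        have hsplit : e = (γ - 1) / γ + (β - 1) / (γ * β) := by
          rw [hedef]; field_simp; ring
        rw [hsplit, Real.rpow_add hκ0]
        apply mul_le_mul_of_nonneg_left _ (Real.rpow_nonneg hκ0.le _)
        calc κ ^ ((β - 1) / (γ * β)) ≤ κ ^ (1 / (τ * κ)) := by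
              apply Real.rpow_le_rpow_of_exponent_le hκ
              rw [hβm1]
              rw [div_le_div_iff₀ (by linarith) hτκ0, one_div,
                inv_mul_cancel₀ hτκ0.ne', one_mul]
              linarith
          _ ≤ Real.exp 1 := by
              rw [Real.rpow_def_of_pos hκ0]
              apply Real.exp_le_exp.mpr
              rw [mul_one_div, div_le_one hτκ0]
              have := Real.log_le_sub_one_of_pos hκ0
              nlinarith
    _ = 2 * Real.exp 1 * ρ * τ * κ ^ ((γ - 1) / γ) := by ring
end

section
/- Let A and B be self-adjoint positive definite n×n real matrices and 0 < α < 1. Then the operator norm of A^α B^α satisfies |A^α B^α|_op ≤ C(n,α) |AB|_op^α for a constant C(n,α) depending only on n and α. -/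
open Matrix

private lemma sq_rpow' (a : ℝ) (ha : 0 ≤ a) (r : ℝ) : (a ^ r) ^ 2 = (a ^ 2) ^ r := by
  rw [← Real.rpow_natCast (a ^ r) 2, ← Real.rpow_mul ha, ← Real.rpow_natCast a 2,
    ← Real.rpow_mul ha, mul_comm]

private lemma weighted_pow' (m : ℕ) (α : ℝ) (hα0 : 0 < α) (hα1 : α < 1) (c z : Fin m → ℝ)
    (hz : ∀ i, 0 ≤ z i) :
    ∑ i, c i ^ 2 * z i ^ α ≤ (∑ i, c i ^ 2 * z i) ^ α * (∑ i, c i ^ 2) ^ (1 - α) := by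
  set S := ∑ i, c i ^ 2 with hS
  rcases eq_or_lt_of_le (show (0:ℝ) ≤ S from Finset.sum_nonneg fun i _ => sq_nonneg _) with h0 | h0
  · have hc : ∀ i, c i = 0 := by
      intro i
      have := (Finset.sum_eq_zero_iff_of_nonneg (fun i _ => sq_nonneg (c i))).mp h0.symm i
        (Finset.mem_univ i)
      exact pow_eq_zero_iff (n := 2) (by norm_num) |>.mp this
    simp only [hc]
    simp only [ne_eq, OfNat.ofNat_ne_zero, not_false_eq_true, zero_pow, zero_mul,
      Finset.sum_const_zero]
    positivity
  · have key := Real.arith_mean_le_rpow_mean Finset.univ (fun i => c i ^ 2 / S)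
      (fun i => z i ^ α) (fun i _ => by positivity)
      (by rw [← Finset.sum_div]; field_simp; exact hS.symm)
      (fun i _ => Real.rpow_nonneg (hz i) α) (p := 1/α)
      (by rw [le_div_iff₀ hα0]; linarith)
    have hz' : ∀ i, (z i ^ α) ^ (1/α : ℝ) = z i := by
      intro i
      rw [← Real.rpow_mul (hz i), one_div, mul_inv_cancel₀ hα0.ne', Real.rpow_one]
    simp only [hz', one_div_one_div] at key
    have e1 : ∑ i, (c i ^ 2 / S) * z i ^ α = (∑ i, c i ^ 2 * z i ^ α) / S := by
      rw [Finset.sum_div]; exact Finset.sum_congr rfl fun i _ => by ring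
    have e2 : ∑ i, (c i ^ 2 / S) * z i = (∑ i, c i ^ 2 * z i) / S := by
      rw [Finset.sum_div]; exact Finset.sum_congr rfl fun i _ => by ring
    rw [e1, e2] at key
    have h3 : ((∑ i, c i ^ 2 * z i) / S) ^ α
        = (∑ i, c i ^ 2 * z i) ^ α / S ^ α := by
      rw [Real.div_rpow (Finset.sum_nonneg fun i _ => mul_nonneg (sq_nonneg _) (hz i)) h0.le]
    rw [h3, div_le_div_iff₀ h0 (by positivity)] at key
    calc ∑ i, c i ^ 2 * z i ^ α
        = ((∑ i, c i ^ 2 * z i ^ α) * S ^ α) / S ^ α := by field_simp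
      _ ≤ ((∑ i, c i ^ 2 * z i) ^ α * S) / S ^ α := by gcongr
      _ = (∑ i, c i ^ 2 * z i) ^ α * S ^ (1 - α) := by
          rw [mul_div_assoc, Real.rpow_sub h0, Real.rpow_one]

private lemma cfc_mulVec_eigenvectorBasis' {m : ℕ} {A : Matrix (Fin m) (Fin m) ℝ}
    (hA : A.IsHermitian) (f : ℝ → ℝ) (j : Fin m) :
    hA.cfc f *ᵥ ⇑(hA.eigenvectorBasis j) =
      f (hA.eigenvalues j) • ⇑(hA.eigenvectorBasis j) := by
  have h1 : (Pi.single j ((RCLike.ofReal ∘ f ∘ hA.eigenvalues) j * 1) : Fin m → ℝ)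
      = f (hA.eigenvalues j) • (Pi.single j 1 : Fin m → ℝ) := by
    simp [Function.comp]; rw [← Pi.single_smul]; simp
  rw [Matrix.IsHermitian.cfc, Unitary.conjStarAlgAut_apply, ← mulVec_mulVec, ← mulVec_mulVec,
    Matrix.IsHermitian.star_eigenvectorUnitary_mulVec, Matrix.diagonal_mulVec_single, h1,
    mulVec_smul, Matrix.IsHermitian.eigenvectorUnitary_mulVec]

private lemma clm_eigen' {m : ℕ} {M : Matrix (Fin m) (Fin m) ℝ}
    (b : OrthonormalBasis (Fin m) ℝ (EuclideanSpace ℝ (Fin m))) (μ : Fin m → ℝ)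
    (h : ∀ j, M *ᵥ ⇑(b j) = μ j • ⇑(b j)) (j : Fin m) :
    Matrix.toEuclideanCLM (𝕜 := ℝ) M (b j) = μ j • b j := by
  have h1 : Matrix.toEuclideanCLM (𝕜 := ℝ) M ((WithLp.equiv 2 _).symm ⇑(b j))
      = (WithLp.equiv 2 _).symm (M *ᵥ ⇑(b j)) := Matrix.toEuclideanCLM_toLp M _
  rw [h] at h1
  simpa using h1

private lemma repr_clm' {m : ℕ} {M : Matrix (Fin m) (Fin m) ℝ}
    (b : OrthonormalBasis (Fin m) ℝ (EuclideanSpace ℝ (Fin m))) (μ : Fin m → ℝ)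
    (h : ∀ j, M *ᵥ ⇑(b j) = μ j • ⇑(b j)) (x : EuclideanSpace ℝ (Fin m)) (i : Fin m) :
    b.repr (Matrix.toEuclideanCLM (𝕜 := ℝ) M x) i = μ i * b.repr x i := by
  conv_lhs => rw [← b.sum_repr x]
  rw [map_sum, map_sum]
  simp only [_root_.map_smul, clm_eigen' b μ h]
  have : ∀ j : Fin m, (b.repr x j • μ j • b.repr (b j)) i
      = b.repr x j * μ j * (if i = j then 1 else 0) := by
    intro j
    simp [b.repr_self, EuclideanSpace.single_apply, mul_assoc, mul_ite]
  rw [WithLp.ofLp_sum, Finset.sum_apply]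
  simp only [this]
  simp [Finset.sum_ite_eq', mul_comm]

private lemma norm_sq_repr' {m : ℕ} (b : OrthonormalBasis (Fin m) ℝ (EuclideanSpace ℝ (Fin m)))
    (y : EuclideanSpace ℝ (Fin m)) : ‖y‖ ^ 2 = ∑ i, (b.repr y i) ^ 2 := by
  rw [← b.repr.norm_map y, EuclideanSpace.norm_eq, Real.sq_sqrt (by positivity)]
  simp [sq_abs]

private lemma hoelder_mccarthy' {m : ℕ} {A : Matrix (Fin m) (Fin m) ℝ} (hA : A.PosDef) {α : ℝ}
    (hα0 : 0 < α) (hα1 : α < 1) (x : EuclideanSpace ℝ (Fin m)) :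
    ‖Matrix.toEuclideanCLM (𝕜 := ℝ) (hA.1.cfc fun t => t ^ α) x‖ ≤
      ‖Matrix.toEuclideanCLM (𝕜 := ℝ) A x‖ ^ α * ‖x‖ ^ (1 - α) := by
  set b := hA.1.eigenvectorBasis with hb
  set lam := hA.1.eigenvalues with hlam'
  have hlam : ∀ i, 0 < lam i := hA.eigenvalues_pos
  set c : Fin m → ℝ := fun i => b.repr x i with hc
  have n1 : ‖Matrix.toEuclideanCLM (𝕜 := ℝ) (hA.1.cfc fun t => t ^ α) x‖ ^ 2
      = ∑ i, c i ^ 2 * (lam i ^ 2) ^ α := by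
    rw [norm_sq_repr' b]
    refine Finset.sum_congr rfl fun i _ => ?_
    rw [repr_clm' b (fun i => lam i ^ α) (fun j => cfc_mulVec_eigenvectorBasis' hA.1 _ j) x i]
    rw [mul_pow, sq_rpow' _ (hlam i).le]
    ring
  have n2 : ‖Matrix.toEuclideanCLM (𝕜 := ℝ) A x‖ ^ 2 = ∑ i, c i ^ 2 * lam i ^ 2 := by
    rw [norm_sq_repr' b]
    refine Finset.sum_congr rfl fun i _ => ?_
    rw [repr_clm' b lam (fun j => hA.1.mulVec_eigenvectorBasis j) x i]
    ring
  have n3 : ‖x‖ ^ 2 = ∑ i, c i ^ 2 := norm_sq_repr' b x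
  have key := weighted_pow' m α hα0 hα1 c (fun i => lam i ^ 2) (fun i => sq_nonneg _)
  have main : ‖Matrix.toEuclideanCLM (𝕜 := ℝ) (hA.1.cfc fun t => t ^ α) x‖ ^ 2
      ≤ (‖Matrix.toEuclideanCLM (𝕜 := ℝ) A x‖ ^ α * ‖x‖ ^ (1 - α)) ^ 2 := by
    rw [n1, mul_pow, sq_rpow' _ (norm_nonneg _), sq_rpow' _ (norm_nonneg _), n2, n3]
    exact key
  have h2 := Real.sqrt_le_sqrt main
  rwa [Real.sqrt_sq (norm_nonneg _), Real.sqrt_sq (by positivity)] at h2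

/-- The operator norm of a real `n×n` matrix, acting on Euclidean space. -/
noncomputable def opNorm {n : ℕ} (M : Matrix (Fin n) (Fin n) ℝ) : ℝ :=
  ‖Matrix.toEuclideanCLM (𝕜 := ℝ) M‖

/-- Let `A`, `B` be self-adjoint positive definite matrices and `0 < α < 1`.  Then
`|A^α B^α|_op ≤ C(n,α) |AB|_op^α`, where `A^α` is the matrix power defined via the
spectral decomposition (Hermitian functional calculus). -/
theorem stmt_5 (n : ℕ) (α : ℝ) (hα0 : 0 < α) (hα1 : α < 1) :
    ∃ C > 0, ∀ (A B : Matrix (Fin n) (Fin n) ℝ) (hA : A.PosDef) (hB : B.PosDef),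
      opNorm (hA.1.cfc (fun x => x ^ α) * hB.1.cfc (fun x => x ^ α)) ≤
        C * opNorm (A * B) ^ α := by
  refine ⟨Real.sqrt n + 1, by positivity, fun A B hA hB => ?_⟩
  set b := hB.1.eigenvectorBasis with hb
  set μ := hB.1.eigenvalues with hμ'
  have hμ : ∀ i, 0 < μ i := hB.eigenvalues_pos
  set K : ℝ := opNorm (A * B) with hK
  have hK0 : 0 ≤ K := norm_nonneg _
  show ‖Matrix.toEuclideanCLM (𝕜 := ℝ) (hA.1.cfc (fun x => x ^ α) * hB.1.cfc (fun x => x ^ α))‖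
    ≤ (Real.sqrt n + 1) * K ^ α
  refine ContinuousLinearMap.opNorm_le_bound _ (by positivity) fun x => ?_
  set c : Fin n → ℝ := fun i => b.repr x i with hc
  have hmul : Matrix.toEuclideanCLM (𝕜 := ℝ)
        (hA.1.cfc (fun x => x ^ α) * hB.1.cfc (fun x => x ^ α)) x
      = Matrix.toEuclideanCLM (𝕜 := ℝ) (hA.1.cfc (fun x => x ^ α))
          (Matrix.toEuclideanCLM (𝕜 := ℝ) (hB.1.cfc (fun x => x ^ α)) x) := by
    rw [_root_.map_mul]; exact ContinuousLinearMap.mul_apply _ _ _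
  have hBx : Matrix.toEuclideanCLM (𝕜 := ℝ) (hB.1.cfc (fun x => x ^ α)) x
      = ∑ i, (c i * μ i ^ α) • b i := by
    conv_lhs => rw [← b.sum_repr x]
    rw [map_sum]
    refine Finset.sum_congr rfl fun i _ => ?_
    rw [_root_.map_smul,
      clm_eigen' b (fun i => μ i ^ α) (fun j => cfc_mulVec_eigenvectorBasis' hB.1 _ j) i,
      smul_smul]
  -- per-term bound
  have hterm : ∀ i, ‖(c i * μ i ^ α) • Matrix.toEuclideanCLM (𝕜 := ℝ)
        (hA.1.cfc (fun x => x ^ α)) (b i)‖ ≤ |c i| * K ^ α := by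
    intro i
    rw [norm_smul]
    have hbi : ‖b i‖ = 1 := b.orthonormal.1 i
    have hAB : Matrix.toEuclideanCLM (𝕜 := ℝ) (A * B) (b i)
        = μ i • Matrix.toEuclideanCLM (𝕜 := ℝ) A (b i) := by
      rw [_root_.map_mul, ContinuousLinearMap.mul_apply,
        clm_eigen' b μ (fun j => hB.1.mulVec_eigenvectorBasis j) i, _root_.map_smul]
    have h1 : ‖Matrix.toEuclideanCLM (𝕜 := ℝ) (hA.1.cfc (fun x => x ^ α)) (b i)‖
        ≤ ‖Matrix.toEuclideanCLM (𝕜 := ℝ) A (b i)‖ ^ α := by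
      have := hoelder_mccarthy' hA hα0 hα1 (b i)
      rwa [hbi, Real.one_rpow, mul_one] at this
    have h2 : μ i ^ α * ‖Matrix.toEuclideanCLM (𝕜 := ℝ) A (b i)‖ ^ α = K ^ α →
        True := fun _ => trivial
    have h3 : μ i ^ α * ‖Matrix.toEuclideanCLM (𝕜 := ℝ) A (b i)‖ ^ α
        = ‖Matrix.toEuclideanCLM (𝕜 := ℝ) (A * B) (b i)‖ ^ α := by
      rw [hAB, norm_smul, Real.norm_eq_abs, abs_of_pos (hμ i),
        Real.mul_rpow (hμ i).le (norm_nonneg _)]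
    have h4 : ‖Matrix.toEuclideanCLM (𝕜 := ℝ) (A * B) (b i)‖ ^ α ≤ K ^ α := by
      apply Real.rpow_le_rpow (norm_nonneg _) _ hα0.le
      calc ‖Matrix.toEuclideanCLM (𝕜 := ℝ) (A * B) (b i)‖
          ≤ ‖Matrix.toEuclideanCLM (𝕜 := ℝ) (A * B)‖ * ‖b i‖ :=
            ContinuousLinearMap.le_opNorm _ _
        _ = K := by rw [hbi, mul_one, hK, opNorm]
    calc ‖c i * μ i ^ α‖ * ‖Matrix.toEuclideanCLM (𝕜 := ℝ) (hA.1.cfc (fun x => x ^ α)) (b i)‖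
        ≤ ‖c i * μ i ^ α‖ * ‖Matrix.toEuclideanCLM (𝕜 := ℝ) A (b i)‖ ^ α := by
          exact mul_le_mul_of_nonneg_left h1 (norm_nonneg _)
      _ = |c i| * (μ i ^ α * ‖Matrix.toEuclideanCLM (𝕜 := ℝ) A (b i)‖ ^ α) := by
          rw [Real.norm_eq_abs, abs_mul, abs_of_pos (Real.rpow_pos_of_pos (hμ i) α)]
          ring
      _ = |c i| * ‖Matrix.toEuclideanCLM (𝕜 := ℝ) (A * B) (b i)‖ ^ α := by rw [h3]
      _ ≤ |c i| * K ^ α := mul_le_mul_of_nonneg_left h4 (abs_nonneg _)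
  -- sum of |c i| bound
  have hsum : ∑ i, |c i| ≤ Real.sqrt n * ‖x‖ := by
    have h5 : (∑ i, |c i|) ^ 2 ≤ (n : ℝ) * ∑ i, |c i| ^ 2 := by
      simpa using sq_sum_le_card_mul_sum_sq (s := Finset.univ) (f := fun i => |c i|)
    have h6 : ∑ i, |c i| ^ 2 = ‖x‖ ^ 2 := by
      rw [norm_sq_repr' b x]
      exact Finset.sum_congr rfl fun i _ => sq_abs _
    have h7 : (∑ i, |c i|) ^ 2 ≤ (Real.sqrt n * ‖x‖) ^ 2 := by
      rw [mul_pow, Real.sq_sqrt (Nat.cast_nonneg n)]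
      rw [h6] at h5
      exact h5
    have h8 := Real.sqrt_le_sqrt h7
    rwa [Real.sqrt_sq (Finset.sum_nonneg fun i _ => abs_nonneg _),
      Real.sqrt_sq (by positivity)] at h8
  calc ‖Matrix.toEuclideanCLM (𝕜 := ℝ)
        (hA.1.cfc (fun x => x ^ α) * hB.1.cfc (fun x => x ^ α)) x‖
      = ‖∑ i, (c i * μ i ^ α) • Matrix.toEuclideanCLM (𝕜 := ℝ)
          (hA.1.cfc (fun x => x ^ α)) (b i)‖ := by
        rw [hmul, hBx, map_sum]
        simp only [_root_.map_smul]
    _ ≤ ∑ i, ‖(c i * μ i ^ α) • Matrix.toEuclideanCLM (𝕜 := ℝ)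
          (hA.1.cfc (fun x => x ^ α)) (b i)‖ := norm_sum_le _ _
    _ ≤ ∑ i, |c i| * K ^ α := Finset.sum_le_sum fun i _ => hterm i
    _ = (∑ i, |c i|) * K ^ α := by rw [Finset.sum_mul]
    _ ≤ (Real.sqrt n * ‖x‖) * K ^ α := by
        exact mul_le_mul_of_nonneg_right hsum (Real.rpow_nonneg hK0 α)
    _ ≤ (Real.sqrt n + 1) * K ^ α * ‖x‖ := by
        have : (0:ℝ) ≤ K ^ α := Real.rpow_nonneg hK0 α
        nlinarith [norm_nonneg x, Real.sqrt_nonneg (n:ℝ)]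
end

section
/- Let A be a self-adjoint positive definite n×n matrix and let e₁,…,eₙ be an orthonormal eigenbasis of a self-adjoint positive definite matrix B with eigenvalues λⱼ > 0. Then for 0 < α < 1, |A^α B^α|_op ≤ n · max_j λⱼ^α |A^α eⱼ| and λⱼ^α |A^α eⱼ| ≤ |A B eⱼ|^α for each j (Hölder–McCarthy inequality applied to A with exponent α). -/
open Matrix RealInnerProductSpace

variable {n : ℕ}

local notation "φ" => Matrix.toEuclideanCLM (𝕜 := ℝ) (n := Fin n)

lemma clm_apply (M : Matrix (Fin n) (Fin n) ℝ) (x : EuclideanSpace ℝ (Fin n)) (i : Fin n) :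
    (φ M x) i = ∑ k, M i k * x k := rfl

lemma phi_mul_apply (M N : Matrix (Fin n) (Fin n) ℝ) (x : EuclideanSpace ℝ (Fin n)) :
    φ (M * N) x = φ M (φ N x) := by
  rw [_root_.map_mul]; rfl

/-- unitary matrices preserve the euclidean norm. -/
lemma norm_phi_unitary {U : Matrix (Fin n) (Fin n) ℝ} (hU : U ∈ Matrix.unitaryGroup (Fin n) ℝ)
    (x : EuclideanSpace ℝ (Fin n)) : ‖φ U x‖ = ‖x‖ := by
  have h1 : star U * U = 1 := hU.1
  have key : ⟪φ U x, φ U x⟫ = ⟪x, x⟫ := by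
    rw [← ContinuousLinearMap.adjoint_inner_left, ← ContinuousLinearMap.star_eq_adjoint,
      ← map_star]
    have : φ (star U) (φ U x) = x := by
      rw [← phi_mul_apply, h1, _root_.map_one, ContinuousLinearMap.one_apply]
    rw [this]
  rw [← Real.sqrt_sq (norm_nonneg (φ U x)), ← Real.sqrt_sq (norm_nonneg x),
    ← real_inner_self_eq_norm_sq, ← real_inner_self_eq_norm_sq, key]

lemma phi_diagonal (d : Fin n → ℝ) (x : EuclideanSpace ℝ (Fin n)) (i : Fin n) :
    (φ (Matrix.diagonal d) x) i = d i * x i := by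
  rw [clm_apply]
  simp [Matrix.diagonal, Finset.sum_ite_eq, Finset.mem_univ]

lemma norm_sq_eucl (x : EuclideanSpace ℝ (Fin n)) : ‖x‖ ^ 2 = ∑ i, x i ^ 2 := by
  rw [EuclideanSpace.norm_eq, Real.sq_sqrt (by positivity)]
  simp [sq_abs]

lemma phi_cfc_eigenvector {M : Matrix (Fin n) (Fin n) ℝ} (hM : M.IsHermitian) (f : ℝ → ℝ)
    {v : EuclideanSpace ℝ (Fin n)} {c : ℝ} (hv : φ M v = c • v) :
    φ (hM.cfc f) v = f c • v := by
  set U : Matrix (Fin n) (Fin n) ℝ := (hM.eigenvectorUnitary : Matrix (Fin n) (Fin n) ℝ) with hUdef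
  have hUmem : U ∈ Matrix.unitaryGroup (Fin n) ℝ := hM.eigenvectorUnitary.2
  have h1 : star U * U = 1 := hUmem.1
  have h2 : U * star U = 1 := hUmem.2
  set μ : Fin n → ℝ := hM.eigenvalues
  have hofReal : ∀ g : Fin n → ℝ, (RCLike.ofReal ∘ g : Fin n → ℝ) = g := fun g => rfl
  set w : EuclideanSpace ℝ (Fin n) := φ (star U) v with hw
  have spec : M = U * Matrix.diagonal μ * star U := by
    have := hM.spectral_theorem
    rwa [hofReal] at this
  have step1 : φ (Matrix.diagonal μ) w = c • w := by
    have e1 : φ (star U) (φ M v) = φ (Matrix.diagonal μ) w := by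
      rw [← phi_mul_apply, spec]
      rw [show star U * (U * Matrix.diagonal μ * star U) = Matrix.diagonal μ * star U by
        rw [← mul_assoc, ← mul_assoc, h1, one_mul], phi_mul_apply]
    have e2 : φ (star U) (φ M v) = c • w := by rw [hv, _root_.map_smul]
    rw [← e1, e2]
  have step2 : ∀ i, μ i * w i = c * w i := by
    intro i
    have := congrArg (fun z : EuclideanSpace ℝ (Fin n) => z i) step1
    simpa [phi_diagonal] using this
  have step3 : φ (Matrix.diagonal (f ∘ μ)) w = f c • w := by
    apply PiLp.ext
    intro i
    rw [phi_diagonal]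
    show f (μ i) * w i = (f c • w) i
    rw [PiLp.smul_apply, smul_eq_mul]
    rcases eq_or_ne (w i) 0 with h | h
    · rw [h, mul_zero, mul_zero]
    · rw [mul_right_cancel₀ h (step2 i)]
  have hcfc : hM.cfc f = U * Matrix.diagonal (f ∘ μ) * star U := rfl
  rw [hcfc, phi_mul_apply, phi_mul_apply, ← hw, step3, _root_.map_smul]
  congr 1
  rw [← phi_mul_apply, h2, _root_.map_one, ContinuousLinearMap.one_apply]

lemma norm_phi_diag_sq (d : Fin n → ℝ) (w : EuclideanSpace ℝ (Fin n)) :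
    ‖φ (Matrix.diagonal d) w‖ ^ 2 = ∑ i, d i ^ 2 * w i ^ 2 := by
  rw [norm_sq_eucl]
  exact Finset.sum_congr rfl fun i _ => by rw [phi_diagonal, mul_pow]

lemma holder_mccarthy {A : Matrix (Fin n) (Fin n) ℝ} (hA : A.PosDef) {α : ℝ}
    (hα0 : 0 < α) (hα1 : α < 1) (v : EuclideanSpace ℝ (Fin n)) (hv : ‖v‖ = 1) :
    ‖φ (hA.1.cfc (fun x => x ^ α)) v‖ ≤ ‖φ A v‖ ^ α := by
  set U : Matrix (Fin n) (Fin n) ℝ := (hA.1.eigenvectorUnitary : Matrix (Fin n) (Fin n) ℝ)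
  have hUmem : U ∈ Matrix.unitaryGroup (Fin n) ℝ := hA.1.eigenvectorUnitary.2
  have h1 : star U * U = 1 := hUmem.1
  set μ : Fin n → ℝ := hA.1.eigenvalues with hμ
  have hμpos : ∀ i, 0 < μ i := hA.eigenvalues_pos
  set w : EuclideanSpace ℝ (Fin n) := φ (star U) v with hw
  have hwn : ‖w‖ = 1 := by rw [hw, norm_phi_unitary (Unitary.star_mem hUmem), hv]
  have hwsum : ∑ i, w i ^ 2 = 1 := by
    have := norm_sq_eucl w
    rw [hwn] at this; simpa using this.symm
  have hofReal : ∀ g : Fin n → ℝ, (RCLike.ofReal ∘ g : Fin n → ℝ) = g := fun g => rfl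
  have spec : A = U * Matrix.diagonal μ * star U := by
    have := hA.1.spectral_theorem
    rwa [hofReal] at this
  have hAv : ‖φ A v‖ = ‖φ (Matrix.diagonal μ) w‖ := by
    conv_lhs => rw [spec, phi_mul_apply, phi_mul_apply, ← hw]
    rw [norm_phi_unitary hUmem]
  have hcfc : hA.1.cfc (fun x => x ^ α) = U * Matrix.diagonal (fun i => μ i ^ α) * star U := rfl
  have hcfcv : ‖φ (hA.1.cfc (fun x => x ^ α)) v‖ = ‖φ (Matrix.diagonal (fun i => μ i ^ α)) w‖ := by
    conv_lhs => rw [hcfc, phi_mul_apply, phi_mul_apply, ← hw]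
    rw [norm_phi_unitary hUmem]
  -- the key mean inequality
  have key : ∑ i, w i ^ 2 * μ i ^ (2 * α) ≤ (∑ i, w i ^ 2 * μ i ^ 2) ^ α := by
    have hp : (1 : ℝ) ≤ 1 / α := by rw [le_div_iff₀ hα0, one_mul]; exact hα1.le
    have := Real.arith_mean_le_rpow_mean (Finset.univ) (fun i => w i ^ 2)
      (fun i => μ i ^ (2 * α)) (fun i _ => sq_nonneg _) hwsum
      (fun i _ => Real.rpow_nonneg (hμpos i).le _) hp
    have hz : ∀ i : Fin n, (μ i ^ (2 * α)) ^ (1 / α : ℝ) = μ i ^ 2 := by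
      intro i
      rw [← Real.rpow_natCast (μ i) 2, ← Real.rpow_mul (hμpos i).le]
      congr 1
      push_cast
      field_simp
    simp only [hz] at this
    rw [one_div_one_div] at this
    exact this
  have lhs_sq : ‖φ (Matrix.diagonal (fun i => μ i ^ α)) w‖ ^ 2 = ∑ i, w i ^ 2 * μ i ^ (2 * α) := by
    rw [norm_phi_diag_sq]
    refine Finset.sum_congr rfl fun i _ => ?_
    rw [← Real.rpow_natCast (μ i ^ α) 2, ← Real.rpow_mul (hμpos i).le, mul_comm]
    push_cast
    rw [mul_comm α 2]
  have rhs_sq : ‖φ (Matrix.diagonal μ) w‖ ^ 2 = ∑ i, w i ^ 2 * μ i ^ 2 := by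
    rw [norm_phi_diag_sq]
    exact Finset.sum_congr rfl fun i _ => mul_comm _ _
  rw [hAv, hcfcv]
  have h2 : ‖φ (Matrix.diagonal (fun i => μ i ^ α)) w‖ ^ 2 ≤
      (‖φ (Matrix.diagonal μ) w‖ ^ α) ^ 2 := by
    rw [lhs_sq]
    calc ∑ i, w i ^ 2 * μ i ^ (2 * α) ≤ (∑ i, w i ^ 2 * μ i ^ 2) ^ α := key
    _ = (‖φ (Matrix.diagonal μ) w‖ ^ α) ^ 2 := by
        rw [← rhs_sq, ← Real.rpow_natCast (‖φ (Matrix.diagonal μ) w‖ ^ α) 2,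
          ← Real.rpow_natCast ‖φ (Matrix.diagonal μ) w‖ 2,
          ← Real.rpow_mul (norm_nonneg _), ← Real.rpow_mul (norm_nonneg _), mul_comm]
  exact (pow_le_pow_iff_left₀ (norm_nonneg _) (Real.rpow_nonneg (norm_nonneg _) _) two_ne_zero).mp h2



/-- Let `A`, `B` be self-adjoint positive definite matrices, `(eⱼ)` an orthonormal
eigenbasis of `B` with eigenvalues `λⱼ > 0`, and `0 < α < 1`.  Then
`|A^α B^α|_op ≤ n · max_j λⱼ^α |A^α eⱼ|` and, for each `j`,
`λⱼ^α |A^α eⱼ| ≤ |A B eⱼ|^α` (Hölder–McCarthy inequality). -/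
theorem stmt_6 (n : ℕ) (hn : 0 < n) (A B : Matrix (Fin n) (Fin n) ℝ)
    (hA : A.PosDef) (hB : B.PosDef) (α : ℝ) (hα0 : 0 < α) (hα1 : α < 1)
    (e : Fin n → EuclideanSpace ℝ (Fin n)) (he : Orthonormal ℝ e)
    (lam : Fin n → ℝ) (hlam : ∀ j, 0 < lam j)
    (heig : ∀ j, Matrix.toEuclideanCLM (𝕜 := ℝ) B (e j) = lam j • e j) :
    opNorm (hA.1.cfc (fun x => x ^ α) * hB.1.cfc (fun x => x ^ α)) ≤
      (n : ℝ) * Finset.univ.sup'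
        (Finset.univ_nonempty_iff.mpr (Fin.pos_iff_nonempty.mp hn))
        (fun j => lam j ^ α *
          ‖Matrix.toEuclideanCLM (𝕜 := ℝ) (hA.1.cfc (fun x => x ^ α)) (e j)‖) ∧
    ∀ j, lam j ^ α *
        ‖Matrix.toEuclideanCLM (𝕜 := ℝ) (hA.1.cfc (fun x => x ^ α)) (e j)‖ ≤
      ‖Matrix.toEuclideanCLM (𝕜 := ℝ) (A * B) (e j)‖ ^ α := by
  set f : ℝ → ℝ := fun x => x ^ α with hf
  set Aα := hA.1.cfc f with hAα
  set Bα := hB.1.cfc f with hBα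
  have hne := Finset.univ_nonempty_iff.mpr (Fin.pos_iff_nonempty.mp hn)
  have hunit : ∀ j, ‖e j‖ = 1 := fun j => he.1 j
  set S := Finset.univ.sup' hne (fun j => lam j ^ α * ‖Matrix.toEuclideanCLM (𝕜 := ℝ) Aα (e j)‖) with hS
  have htermnn : ∀ j, 0 ≤ lam j ^ α * ‖Matrix.toEuclideanCLM (𝕜 := ℝ) Aα (e j)‖ := fun j =>
    mul_nonneg (Real.rpow_nonneg (hlam j).le _) (norm_nonneg _)
  have hSnn : 0 ≤ S := by
    rw [hS]
    exact le_trans (htermnn ⟨0, hn⟩)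
      (Finset.le_sup' (fun j => lam j ^ α * ‖Matrix.toEuclideanCLM (𝕜 := ℝ) Aα (e j)‖)
        (Finset.mem_univ (⟨0, hn⟩ : Fin n)))
  have hBαe : ∀ j, Matrix.toEuclideanCLM (𝕜 := ℝ) Bα (e j) = lam j ^ α • e j := fun j =>
    phi_cfc_eigenvector hB.1 f (heig j)
  constructor
  · -- operator norm bound
    show ‖Matrix.toEuclideanCLM (𝕜 := ℝ) (Aα * Bα)‖ ≤ (n : ℝ) * S
    apply ContinuousLinearMap.opNorm_le_bound _ (by positivity)
    intro x
    -- orthonormal basis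
    have hcard : Fintype.card (Fin n) = Module.finrank ℝ (EuclideanSpace ℝ (Fin n)) := by
      simp [finrank_euclideanSpace_fin]
    haveI : Nonempty (Fin n) := Fin.pos_iff_nonempty.mp hn
    have hsp : ⊤ ≤ Submodule.span ℝ (Set.range e) :=
      (he.linearIndependent.span_eq_top_of_card_eq_finrank hcard).ge
    set b : OrthonormalBasis (Fin n) ℝ (EuclideanSpace ℝ (Fin n)) :=
      OrthonormalBasis.mk he hsp with hb
    have hbe : ∀ j, b j = e j := fun j => by rw [hb, OrthonormalBasis.coe_mk]
    have hexp : Matrix.toEuclideanCLM (𝕜 := ℝ) (Aα * Bα) x = ∑ j, (b.repr x j * lam j ^ α) • Matrix.toEuclideanCLM (𝕜 := ℝ) Aα (e j) := by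
      rw [phi_mul_apply]
      conv_lhs => rw [← b.sum_repr x]
      rw [map_sum, map_sum]
      refine Finset.sum_congr rfl fun j _ => ?_
      rw [hbe, _root_.map_smul, hBαe, smul_smul, _root_.map_smul]
    rw [hexp]
    calc ‖∑ j, (b.repr x j * lam j ^ α) • Matrix.toEuclideanCLM (𝕜 := ℝ) Aα (e j)‖
        ≤ ∑ j, ‖(b.repr x j * lam j ^ α) • Matrix.toEuclideanCLM (𝕜 := ℝ) Aα (e j)‖ := norm_sum_le _ _
      _ ≤ ∑ j : Fin n, ‖x‖ * S := by
          refine Finset.sum_le_sum fun j _ => ?_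
          rw [norm_smul, Real.norm_eq_abs, abs_mul,
            abs_of_nonneg (Real.rpow_nonneg (hlam j).le _), mul_assoc]
          refine mul_le_mul ?_ (by
            rw [hS]
            exact Finset.le_sup' (fun j => lam j ^ α * ‖Matrix.toEuclideanCLM (𝕜 := ℝ) Aα (e j)‖)
              (Finset.mem_univ j)) (htermnn j) (norm_nonneg x)
          rw [b.repr_apply_apply, hbe]
          calc |⟪e j, x⟫| ≤ ‖e j‖ * ‖x‖ := abs_real_inner_le_norm _ _
            _ = ‖x‖ := by rw [hunit j, one_mul]
      _ = (n : ℝ) * S * ‖x‖ := by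
          rw [Finset.sum_const, Finset.card_univ, Fintype.card_fin, nsmul_eq_mul]; ring
  · -- Hölder–McCarthy part
    intro j
    have hABe : Matrix.toEuclideanCLM (𝕜 := ℝ) (A * B) (e j) = lam j • Matrix.toEuclideanCLM (𝕜 := ℝ) A (e j) := by
      rw [phi_mul_apply, heig, _root_.map_smul]
    have hnorm : ‖Matrix.toEuclideanCLM (𝕜 := ℝ) (A * B) (e j)‖ = lam j * ‖Matrix.toEuclideanCLM (𝕜 := ℝ) A (e j)‖ := by
      rw [hABe, norm_smul, Real.norm_eq_abs, abs_of_pos (hlam j)]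
    rw [hnorm, Real.mul_rpow (hlam j).le (norm_nonneg _)]
    exact mul_le_mul_of_nonneg_left (holder_mccarthy hA hα0 hα1 (e j) (hunit j))
      (Real.rpow_nonneg (hlam j).le _)
end
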